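/- Let (V, d) be a pseudometric space, let L ⊆ V be a finite nonempty set of labeled points, and let s ∈ L, u, v ∈ V be such that d(s, v) = d(s, u) + d(u, v) (i.e., u lies on a shortest path from s to v). Then for every j ≥ 1, if the set {s' ∈ L : d(s', u) < d(s, u)} has at least j elements, so does the set {s' ∈ L : d(s', v) < d(s, v)}. Equivalently, if s is among the j nearest labeled points to v (at most j−1 labeled points are strictly closer to v than s), then s is among the j nearest labeled points to u. -/
import Mathlib

/-- Let `(V, d)` be a pseudometric space, `L ⊆ V` a finite nonempty set of
labeled points, and `s ∈ L`, `u, v ∈ V` with `d(s, v) = d(s, u) + d(u, v)` (i.e. `u` lies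
on a shortest path from `s` to `v`).  Then for every `j ≥ 1`, if
`{s' ∈ L : d(s', u) < d(s, u)}` has at least `j` elements, so does
`{s' ∈ L : d(s', v) < d(s, v)}`. -/
theorem stmt_10 {V : Type*} [PseudoMetricSpace V]
    (L : Finset V) (hL : L.Nonempty) (s : V) (hs : s ∈ L) (u v : V)
    (hpath : dist s v = dist s u + dist u v)
    (j : ℕ) (hj : 1 ≤ j)
    (hu : j ≤ (L.filter fun s' => dist s' u < dist s u).card) :
    j ≤ (L.filter fun s' => dist s' v < dist s v).card := by
  refine hu.trans (Finset.card_le_card ?_)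
  intro x hx
  simp only [Finset.mem_filter] at hx ⊢
  refine ⟨hx.1, ?_⟩
  calc dist x v ≤ dist x u + dist u v := dist_triangle _ _ _
    _ < dist s u + dist u v := by linarith [hx.2]
    _ = dist s v := hpath.symm
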